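/- Let B be a symmetric bilinear form of signature (1, m) on a real vector space E, let P, P', N, N' ∈ E and suppose: (i) α = P + N = P' + N'; (ii) N and N' lie in the convex cone generated by vectors D₁, …, D_r ∈ E on whose span B is negative definite and which satisfy B(D_i, D_j) ≥ 0 for i ≠ j; (iii) B(P, D_i) ≥ 0 and B(P', D_i) ≥ 0 for all i; (iv) B(P, N) = 0 and B(P', N') = 0. Then P = P' and N = N'. -/

import Mathlib

theorem zariski_decomposition_unique
    {E : Type*} [AddCommGroup E] [Module ℝ E] (m r : ℕ)
    (B : E →ₗ[ℝ] E →ₗ[ℝ] ℝ)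
    (hsymm : ∀ x y : E, B x y = B y x)
    (hsig : ∃ e : Module.Basis (Fin (m + 1)) ℝ E,
      (∀ i j, i ≠ j → B (e i) (e j) = 0) ∧
      0 < B (e 0) (e 0) ∧ ∀ i, i ≠ 0 → B (e i) (e i) < 0)
    (D : Fin r → E)
    (hnegdef : ∀ x ∈ Submodule.span ℝ (Set.range D), x ≠ 0 → B x x < 0)
    (hDij : ∀ i j, i ≠ j → 0 ≤ B (D i) (D j))
    (P P' N N' : E)
    (hdec : P + N = P' + N')
    (hN : ∃ a : Fin r → ℝ, (∀ i, 0 ≤ a i) ∧ N = ∑ i, a i • D i)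
    (hN' : ∃ a : Fin r → ℝ, (∀ i, 0 ≤ a i) ∧ N' = ∑ i, a i • D i)
    (hP : ∀ i, 0 ≤ B P (D i)) (hP' : ∀ i, 0 ≤ B P' (D i))
    (hPN : B P N = 0) (hPN' : B P' N' = 0) :
    P = P' ∧ N = N' := by
  obtain ⟨a, ha, hNa⟩ := hN
  obtain ⟨b, hb, hN'b⟩ := hN'
  have hx : N - N' = P' - P := by
    rw [sub_eq_sub_iff_add_eq_add, add_comm]
    exact hdec
  have hspan : N - N' ∈ Submodule.span ℝ (Set.range D) := by
    apply Submodule.sub_mem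
    · rw [hNa]
      exact Submodule.sum_mem _ fun i _ =>
        Submodule.smul_mem _ _ (Submodule.subset_span ⟨i, rfl⟩)
    · rw [hN'b]
      exact Submodule.sum_mem _ fun i _ =>
        Submodule.smul_mem _ _ (Submodule.subset_span ⟨i, rfl⟩)
  have hBP'N : 0 ≤ B P' N := by
    rw [hNa, map_sum]
    apply Finset.sum_nonneg
    intro i _
    rw [map_smul]
    exact mul_nonneg (ha i) (hP' i)
  have hBPN' : 0 ≤ B P N' := by
    rw [hN'b, map_sum]
    apply Finset.sum_nonneg
    intro i _
    rw [map_smul]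
    exact mul_nonneg (hb i) (hP i)
  have key : 0 ≤ B (N - N') (N - N') := by
    nth_rewrite 1 [hx]
    simp only [map_sub, LinearMap.sub_apply]
    linarith [hPN, hPN', hsymm P' N, hsymm P N']
  have hzero : N - N' = 0 := by
    by_contra h
    exact absurd key (not_le.mpr (hnegdef _ hspan h))
  have hNN : N = N' := sub_eq_zero.mp hzero
  refine ⟨?_, hNN⟩
  have := hdec
  rw [hNN] at this
  exact add_right_cancel this
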